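/- Let $J_n$ be the block Jacobi matrix of a matrix measure on $[0,1]$ with canonical moments $U_1, \ldots, U_{2n-1}$ satisfying $\mathbf{0} < U_k < \mathbf{1}$. Then $\det(J_n) = \left(\prod_{k=1}^{n} \det U_{2k-1}\right)\left(\prod_{k=1}^{n-1} \det(\mathbf{1} - U_{2k})\right)$. -/

import Mathlib

open Matrix
open scoped ComplexOrder

lemma aux_det_upper {n p : ℕ} (hp : 0 < p)
    (M : Matrix (Fin n × Fin p) (Fin n × Fin p) ℂ)
    (h : ∀ (i j : Fin n) (a b : Fin p), j < i → M (i,a) (j,b) = 0) :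
    M.det = ∏ i : Fin n, (Matrix.of fun a b => M (i,a) (i,b)).det := by
  have hbt : M.BlockTriangular Prod.fst := fun x y hlt => by
    have := h x.1 y.1 x.2 y.2 hlt
    simpa using this
  rw [Matrix.BlockTriangular.det hbt]
  have himg : (Finset.univ.image (Prod.fst : Fin n × Fin p → Fin n)) = Finset.univ := by
    apply Finset.eq_univ_iff_forall.mpr
    intro i; exact Finset.mem_image.mpr ⟨(i, ⟨0, hp⟩), Finset.mem_univ _, rfl⟩
  rw [himg]
  apply Finset.prod_congr rfl
  intro i _
  let e : Fin p ≃ {x : Fin n × Fin p // x.1 = i} :=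
    { toFun := fun a => ⟨(i, a), rfl⟩
      invFun := fun x => x.1.2
      left_inv := fun a => rfl
      right_inv := fun x => by
        apply Subtype.ext
        apply Prod.ext
        · exact x.2.symm
        · rfl }
  rw [← Matrix.det_submatrix_equiv_self e (M.toSquareBlock Prod.fst i)]
  congr 1

lemma aux_det_lower {n p : ℕ} (hp : 0 < p)
    (M : Matrix (Fin n × Fin p) (Fin n × Fin p) ℂ)
    (h : ∀ (i j : Fin n) (a b : Fin p), i < j → M (i,a) (j,b) = 0) :
    M.det = ∏ i : Fin n, (Matrix.of fun a b => M (i,a) (i,b)).det := by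
  rw [← Matrix.det_transpose M,
    aux_det_upper hp Mᵀ (fun i j a b hlt => h j i b a hlt)]
  apply Finset.prod_congr rfl
  intro i _
  rw [show (Matrix.of fun a b => Mᵀ (i,a) (i,b)) = (Matrix.of fun a b => M (i,a) (i,b))ᵀ from rfl,
    Matrix.det_transpose]

lemma hsum1 {n p : ℕ} (i j : Fin n) (x y : Fin p → ℂ) :
    (∑ k : Fin n, ∑ c : Fin p, (if i = k then x c else 0) * (if k = j then y c else 0))
      = if i = j then ∑ c, x c * y c else 0 := by
  have h : ∀ k : Fin n, (∑ c : Fin p, (if i = k then x c else 0) * (if k = j then y c else 0))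
      = if i = k then (if k = j then ∑ c, x c * y c else 0) else 0 := by
    intro k; split_ifs <;> simp [Finset.mul_sum]
  simp only [h]
  simp [Finset.sum_ite_eq]

lemma hsum2 {n p : ℕ} (i j : Fin n) (x : Fin p → ℂ) (y : Fin n → Fin p → ℂ) :
    (∑ k : Fin n, ∑ c : Fin p, (if i = k then x c else 0) *
        (if (j : ℕ) = (k : ℕ) + 1 then y k c else 0))
      = if (j : ℕ) = (i : ℕ) + 1 then ∑ c, x c * y i c else 0 := by
  have h : ∀ k : Fin n, (∑ c : Fin p, (if i = k then x c else 0) *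
        (if (j : ℕ) = (k : ℕ) + 1 then y k c else 0))
      = if i = k then (if (j : ℕ) = (k : ℕ) + 1 then ∑ c, x c * y k c else 0) else 0 := by
    intro k; split_ifs <;> simp
  simp only [h]
  simp [Finset.sum_ite_eq]

lemma hsum3 {n p : ℕ} (i j : Fin n) (x : Fin n → Fin p → ℂ) (y : Fin p → ℂ) :
    (∑ k : Fin n, ∑ c : Fin p, (if (i : ℕ) = (k : ℕ) + 1 then x k c else 0) *
        (if k = j then y c else 0))
      = if (i : ℕ) = (j : ℕ) + 1 then ∑ c, x j c * y c else 0 := by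
  have h : ∀ k : Fin n, (∑ c : Fin p, (if (i : ℕ) = (k : ℕ) + 1 then x k c else 0) *
        (if k = j then y c else 0))
      = if k = j then (if (i : ℕ) = (k : ℕ) + 1 then ∑ c, x k c * y c else 0) else 0 := by
    intro k; split_ifs <;> simp
  simp only [h]
  simp [Finset.sum_ite_eq']

lemma hsum4 {n p : ℕ} (i j : Fin n) (x y : Fin n → Fin p → ℂ) :
    (∑ k : Fin n, ∑ c : Fin p, (if (i : ℕ) = (k : ℕ) + 1 then x k c else 0) *
        (if (j : ℕ) = (k : ℕ) + 1 then y k c else 0))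
      = if i = j then
          (∑ k : Fin n, if (i : ℕ) = (k : ℕ) + 1 then ∑ c, x k c * y k c else 0)
        else 0 := by
  rcases eq_or_ne i j with hij | hij
  · subst hij
    simp only [if_pos rfl]
    apply Finset.sum_congr rfl
    intro k _
    split_ifs <;> simp [Finset.mul_sum]
  · rw [if_neg hij]
    apply Finset.sum_eq_zero
    intro k _
    apply Finset.sum_eq_zero
    intro c _
    have : ¬ ((i : ℕ) = (k : ℕ) + 1 ∧ (j : ℕ) = (k : ℕ) + 1) := by
      rintro ⟨h1, h2⟩
      exact hij (Fin.ext (h1.trans h2.symm))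
    split_ifs with h1 h2
    · exact absurd ⟨h1, h2⟩ this
    · simp
    · simp
    · simp

lemma hsum4zero {n : ℕ} (i : Fin n) (hi : (i : ℕ) = 0) (g : Fin n → ℂ) :
    (∑ k : Fin n, if (i : ℕ) = (k : ℕ) + 1 then g k else 0) = 0 := by
  apply Finset.sum_eq_zero
  intro k _
  rw [if_neg (by omega)]

lemma hsum4succ {n : ℕ} (i : Fin n) (m : ℕ) (hi : (i : ℕ) = m + 1) (hm : m < n)
    (g : Fin n → ℂ) :
    (∑ k : Fin n, if (i : ℕ) = (k : ℕ) + 1 then g k else 0) = g ⟨m, hm⟩ := by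
  rw [Finset.sum_eq_single (⟨m, hm⟩ : Fin n)]
  · rw [if_pos (by simp [hi])]
  · intro k _ hk
    rw [if_neg (fun h => hk (Fin.ext (by simp; omega)))]
  · intro h; exact absurd (Finset.mem_univ _) h


/-- For the `np × np` Hermitian block Jacobi matrix `J_n` of a matrix measure on
`[0,1]` with canonical moments `U_1, …, U_{2n-1}` satisfying `0 < U_k < 1`,
one has `det J_n = (∏_{k=1}^{n} det U_{2k-1})(∏_{k=1}^{n-1} det(1 - U_{2k}))`.
Here `ζ, u, v` are the Dette–Studden decomposition of the recursion coefficients,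
`γ_k` the Gram matrices (with `γ_0 = 1` and `γ_k = γ_{k-1} v_k`), `S_k` the positive
definite square root of `γ_k`, and `B_k = γ_{k-1}^{1/2} u_{k-1} γ_{k-1}^{-1/2}`,
`Ã_k = γ_{k-1}^{-1/2} γ_k^{1/2}` the Hermitian (orthonormal) recursion coefficients. -/
theorem det_block_jacobi (p n : ℕ) (hp : 0 < p) (hn : 0 < n)
    (U ζ u v γ S B A : ℕ → Matrix (Fin p) (Fin p) ℂ)
    (hU : ∀ k, 1 ≤ k → k ≤ 2 * n - 1 →
      (U k).PosDef ∧ ((1 : Matrix (Fin p) (Fin p) ℂ) - U k).PosDef)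
    (hζ0 : ζ 0 = 0) (hζ1 : ζ 1 = U 1)
    (hζ : ∀ k, 2 ≤ k → ζ k = (1 - U (k - 1)) * U k)
    (hu : ∀ k, u k = ζ (2 * k + 1) + ζ (2 * k))
    (hv : ∀ k, 1 ≤ k → v k = ζ (2 * k - 1) * ζ (2 * k))
    (hγ0 : γ 0 = 1)
    (hγ : ∀ k, 1 ≤ k → γ k = γ (k - 1) * v k)
    (hS : ∀ k, (S k).PosDef ∧ S k * S k = γ k)
    (hB : ∀ k, 1 ≤ k → B k = S (k - 1) * u (k - 1) * (S (k - 1))⁻¹)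
    (hA : ∀ k, 1 ≤ k → A k = (S (k - 1))⁻¹ * S k)
    (J : Matrix (Fin n × Fin p) (Fin n × Fin p) ℂ)
    (hJ : ∀ (i : Fin n) (a : Fin p) (j : Fin n) (b : Fin p),
      J (i, a) (j, b) =
        if i = j then B ((i : ℕ) + 1) a b
        else if (j : ℕ) = (i : ℕ) + 1 then A ((i : ℕ) + 1) a b
        else if (i : ℕ) = (j : ℕ) + 1 then (A ((j : ℕ) + 1))ᴴ a b
        else 0) :
    J.det = (∏ k ∈ Finset.range n, (U (2 * k + 1)).det)
      * ∏ k ∈ Finset.Icc 1 (n - 1), ((1 : Matrix (Fin p) (Fin p) ℂ) - U (2 * k)).det := by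
  have hSH : ∀ k, (S k)ᴴ = S k := fun k => (hS k).1.isHermitian
  have hSdet : ∀ k, IsUnit (S k).det := fun k => (hS k).1.det_pos.ne'.isUnit
  have hζdet : ∀ m, 1 ≤ m → m ≤ 2 * n - 1 → IsUnit (ζ m).det := by
    intro m h1 h2
    rcases Nat.lt_or_ge m 2 with h | h
    · have hm1 : m = 1 := by omega
      subst hm1
      rw [hζ1]
      exact (hU 1 le_rfl (by omega)).1.det_pos.ne'.isUnit
    · rw [hζ m h, Matrix.det_mul]
      exact ((hU (m - 1) (by omega) (by omega)).2.det_pos.ne'.isUnit).mul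
        ((hU m h1 h2).1.det_pos.ne'.isUnit)
  obtain ⟨D, hD⟩ : ∃ D : ℕ → Matrix (Fin p) (Fin p) ℂ,
      ∀ k, D k = S (k - 1) * ζ (2 * k - 1) * (S (k - 1))⁻¹ := ⟨_, fun _ => rfl⟩
  have hDdet : ∀ k, 1 ≤ k → k ≤ n → (D k).det = (ζ (2 * k - 1)).det := by
    intro k h1 h2
    rw [hD, Matrix.det_mul, Matrix.det_mul, Matrix.det_nonsing_inv, Ring.inverse_eq_inv']
    have hne : (S (k - 1)).det ≠ 0 := (hS (k - 1)).1.det_pos.ne'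
    rw [mul_comm ((S (k - 1)).det) _, mul_assoc, mul_inv_cancel₀ hne, mul_one]
  have hDunit : ∀ k, 1 ≤ k → k ≤ n → IsUnit (D k).det := fun k h1 h2 =>
    (hDdet k h1 h2) ▸ hζdet (2 * k - 1) (by omega) (by omega)
  -- the core Schur-complement identity
  have hcore : ∀ k, 1 ≤ k → k ≤ n - 1 →
      (A k)ᴴ * ((D k)⁻¹ * A k) = S k * ζ (2 * k) * (S k)⁻¹ := by
    intro k h1 h2
    have htdet := hSdet (k - 1)
    have hz1 : IsUnit (ζ (2 * k - 1)).det := hζdet _ (by omega) (by omega)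
    have hsr : S k = γ k * (S k)⁻¹ := by
      rw [← (hS k).2, Matrix.mul_nonsing_inv_cancel_right _ _ (hSdet k)]
    have hsexp : S k = S (k - 1) * (S (k - 1) * (ζ (2 * k - 1) * (ζ (2 * k) * (S k)⁻¹))) := by
      calc S k = γ k * (S k)⁻¹ := hsr
        _ = (γ (k - 1) * v k) * (S k)⁻¹ := by rw [← hγ k h1]
        _ = ((S (k - 1) * S (k - 1)) * (ζ (2 * k - 1) * ζ (2 * k))) * (S k)⁻¹ := by
            rw [(hS (k - 1)).2, ← hv k h1]
        _ = S (k - 1) * (S (k - 1) * (ζ (2 * k - 1) * (ζ (2 * k) * (S k)⁻¹))) := by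
            simp only [Matrix.mul_assoc]
    have hmid : (S (k - 1))⁻¹ * ((S (k - 1))⁻¹ * S k)
        = ζ (2 * k - 1) * (ζ (2 * k) * (S k)⁻¹) := by
      conv_lhs => rw [hsexp]
      rw [Matrix.nonsing_inv_mul_cancel_left _ _ htdet,
        Matrix.nonsing_inv_mul_cancel_left _ _ htdet]
    rw [hA k h1, hD k]
    rw [Matrix.conjTranspose_mul, Matrix.conjTranspose_nonsing_inv]
    simp only [hSH]
    rw [Matrix.mul_inv_rev, Matrix.mul_inv_rev, Matrix.nonsing_inv_nonsing_inv _ htdet]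
    simp only [Matrix.mul_assoc]
    rw [Matrix.nonsing_inv_mul_cancel_left _ _ htdet, hmid,
      Matrix.nonsing_inv_mul_cancel_left _ _ hz1]
  have hB1 : B 1 = D 1 := by
    rw [hB 1 le_rfl, hD]
    norm_num
    rw [hu 0]
    norm_num [hζ0]
  have hBk : ∀ k, 1 ≤ k → k ≤ n - 1 →
      B (k + 1) = D (k + 1) + (A k)ᴴ * ((D k)⁻¹ * A k) := by
    intro k h1 h2
    rw [hcore k h1 h2, hB (k + 1) (by omega), hD (k + 1)]
    simp only [Nat.add_sub_cancel]
    have e1 : 2 * (k + 1) - 1 = 2 * k + 1 := by omega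
    rw [e1, hu k, Matrix.mul_add, Matrix.add_mul]
  -- the factors
  obtain ⟨L, hL⟩ : ∃ L : Matrix (Fin n × Fin p) (Fin n × Fin p) ℂ,
      ∀ x y : Fin n × Fin p, L x y =
        (if x.1 = y.1 then D ((x.1 : ℕ) + 1) x.2 y.2 else 0)
        + (if (x.1 : ℕ) = (y.1 : ℕ) + 1 then (A ((y.1 : ℕ) + 1))ᴴ x.2 y.2 else 0) :=
    ⟨_, fun _ _ => rfl⟩
  obtain ⟨V, hV⟩ : ∃ V : Matrix (Fin n × Fin p) (Fin n × Fin p) ℂ,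
      ∀ x y : Fin n × Fin p, V x y =
        (if x.1 = y.1 then (1 : Matrix (Fin p) (Fin p) ℂ) x.2 y.2 else 0)
        + (if (y.1 : ℕ) = (x.1 : ℕ) + 1 then
            ((D ((x.1 : ℕ) + 1))⁻¹ * A ((x.1 : ℕ) + 1)) x.2 y.2 else 0) :=
    ⟨_, fun _ _ => rfl⟩
  have hJLV : J = L * V := by
    ext ⟨i, a⟩ ⟨j, b⟩
    rw [Matrix.mul_apply, hJ, Fintype.sum_prod_type]
    have hexp : ∀ (k : Fin n) (c : Fin p), L (i, a) (k, c) * V (k, c) (j, b) =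
        (if i = k then D ((i : ℕ) + 1) a c else 0)
          * (if k = j then (1 : Matrix (Fin p) (Fin p) ℂ) c b else 0)
        + (if i = k then D ((i : ℕ) + 1) a c else 0)
          * (if (j : ℕ) = (k : ℕ) + 1 then ((D ((k : ℕ) + 1))⁻¹ * A ((k : ℕ) + 1)) c b else 0)
        + ((if (i : ℕ) = (k : ℕ) + 1 then (A ((k : ℕ) + 1))ᴴ a c else 0)
          * (if k = j then (1 : Matrix (Fin p) (Fin p) ℂ) c b else 0)
        + (if (i : ℕ) = (k : ℕ) + 1 then (A ((k : ℕ) + 1))ᴴ a c else 0)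
          * (if (j : ℕ) = (k : ℕ) + 1 then ((D ((k : ℕ) + 1))⁻¹ * A ((k : ℕ) + 1)) c b else 0)) := by
      intro k c
      rw [hL, hV]
      ring
    simp only [hexp, Finset.sum_add_distrib]
    rw [hsum1 i j (fun c => D ((i : ℕ) + 1) a c)
        (fun c => (1 : Matrix (Fin p) (Fin p) ℂ) c b),
      hsum2 i j (fun c => D ((i : ℕ) + 1) a c)
        (fun k c => ((D ((k : ℕ) + 1))⁻¹ * A ((k : ℕ) + 1)) c b),
      hsum3 i j (fun k c => (A ((k : ℕ) + 1))ᴴ a c)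
        (fun c => (1 : Matrix (Fin p) (Fin p) ℂ) c b),
      hsum4 i j (fun k c => (A ((k : ℕ) + 1))ᴴ a c)
        (fun k c => ((D ((k : ℕ) + 1))⁻¹ * A ((k : ℕ) + 1)) c b)]
    rcases eq_or_ne i j with hij | hij
    · subst hij
      have hne : ¬ ((i : ℕ) = (i : ℕ) + 1) := by omega
      simp only [if_pos rfl, if_neg hne, eq_self_iff_true, if_true, add_zero, zero_add]
      rw [← Matrix.mul_apply, Matrix.mul_one]
      rcases Nat.eq_zero_or_eq_succ_pred (i : ℕ) with hi0 | hisucc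
      · rw [hsum4zero i hi0, add_zero, hi0]
        norm_num [hB1]
      · have hilt := i.isLt
        set m := (i : ℕ) - 1 with hm
        have hmn : m < n := by omega
        have hiv : (i : ℕ) = m + 1 := hisucc
        rw [hsum4succ i m hiv hmn, ← Matrix.mul_apply, hiv,
          hBk (m + 1) (by omega) (by omega)]
        simp [Matrix.add_apply]
    · have hij' : ¬ (i = j) := hij
      rcases eq_or_ne ((j : ℕ)) ((i : ℕ) + 1) with hji | hji
      · have h3 : ¬ ((i : ℕ) = (j : ℕ) + 1) := by omega
        simp only [if_neg hij', if_pos hji, if_neg h3, add_zero, zero_add]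
        rw [← Matrix.mul_apply,
          Matrix.mul_nonsing_inv_cancel_left _ _ (hDunit ((i : ℕ) + 1) (by omega) i.isLt)]
      · rcases eq_or_ne ((i : ℕ)) ((j : ℕ) + 1) with hij2 | hij2
        · simp only [if_neg hij', if_neg hji, if_pos hij2, add_zero, zero_add]
          rw [← Matrix.mul_apply, Matrix.mul_one]
        · simp only [if_neg hij', if_neg hji, if_neg hij2, add_zero, zero_add]
  -- determinants of the factors
  have hdetL : L.det = ∏ i : Fin n, (D ((i : ℕ) + 1)).det := by
    rw [aux_det_lower hp L (fun i j a b hlt => by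
      have h1 : i ≠ j := ne_of_lt hlt
      have h2 : ¬ ((i : ℕ) = (j : ℕ) + 1) := by
        have := (Fin.lt_iff_val_lt_val.mp hlt); omega
      rw [hL]; simp [h1, h2])]
    apply Finset.prod_congr rfl
    intro i _
    have hblk : (Matrix.of fun a b => L (i, a) (i, b)) = D ((i : ℕ) + 1) := by
      ext a b
      rw [Matrix.of_apply, hL]
      simp [show ¬ ((i : ℕ) = (i : ℕ) + 1) from by omega]
    rw [hblk]
  have hdetV : V.det = 1 := by
    rw [aux_det_upper hp V (fun i j a b hlt => by
      have h1 : i ≠ j := ne_of_gt hlt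
      have h2 : ¬ ((j : ℕ) = (i : ℕ) + 1) := by
        have := (Fin.lt_iff_val_lt_val.mp hlt); omega
      rw [hV]; simp [h1, h2])]
    have : ∀ i : Fin n, (Matrix.of fun a b => V (i, a) (i, b)) = (1 : Matrix (Fin p) (Fin p) ℂ) := by
      intro i
      ext a b
      rw [Matrix.of_apply, hV]
      simp [show ¬ ((i : ℕ) = (i : ℕ) + 1) from by omega]
    simp [this]
  rw [hJLV, Matrix.det_mul, hdetL, hdetV, mul_one]
  have hDz : ∀ i : Fin n, (D ((i : ℕ) + 1)).det = (ζ (2 * (i : ℕ) + 1)).det := by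
    intro i
    rw [hDdet ((i : ℕ) + 1) (by omega) i.isLt]
    congr 1
  rw [Finset.prod_congr rfl (fun i _ => hDz i)]
  rw [Fin.prod_univ_eq_prod_range (fun m => (ζ (2 * m + 1)).det) n]
  -- split off the first factor
  have hins : Finset.range n = insert 0 (Finset.Icc 1 (n - 1)) := by
    ext m
    simp only [Finset.mem_range, Finset.mem_insert, Finset.mem_Icc]
    omega
  have h0 : (0 : ℕ) ∉ Finset.Icc 1 (n - 1) := by simp
  rw [hins, Finset.prod_insert h0, Finset.prod_insert h0]
  have hfac : ∀ m ∈ Finset.Icc 1 (n - 1),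
      (ζ (2 * m + 1)).det
        = ((1 : Matrix (Fin p) (Fin p) ℂ) - U (2 * m)).det * (U (2 * m + 1)).det := by
    intro m hm
    simp only [Finset.mem_Icc] at hm
    rw [hζ (2 * m + 1) (by omega), Matrix.det_mul]
    congr 3
  rw [Finset.prod_congr rfl hfac, Finset.prod_mul_distrib]
  rw [hζ1]
  norm_num
  ring
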